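/- Let 𝔖 = (𝒟, 𝒰, ℒ, 𝔅) be a 𝒟-invariant, order-increasing group lifting structure with 𝔅 nonempty, and let 𝒞 := ⟨𝒰 ∪ ℒ⟩ be its lifting cascade group. Then irreducible group lifting factorizations in 𝒞 are unique: if S_{N−1}⋯S₀ = S'_{N'−1}⋯S'₀ for two irreducible cascades over 𝒰 ∪ ℒ, then N' = N and S'_i = S_i for all 0 ≤ i < N. -/

import Mathlib

open LaurentPolynomial Matrix

noncomputable section

/-- `R` = the ring `ℝ[z,z⁻¹]` of Laurent polynomials with real coefficients. -/
abbrev R2 := LaurentPolynomial ℝ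

/-- 2×2 matrices over `R`. -/
abbrev M2 := Matrix (Fin 2) (Fin 2) R2

/-- `SL(2,R)`. -/
abbrev SL2 := Matrix.SpecialLinearGroup (Fin 2) R2

/-- The ℝ-algebra involution `σ` determined by `σ(z) = z⁻¹`. -/
def σ : R2 ≃ₐ[ℝ] R2 := LaurentPolynomial.invert

/-- Entrywise application of `σ` to a matrix; plays the role of `H(z⁻¹)`. -/
def mσ (H : M2) : M2 := H.map fun f => σ f

/-- `Λ = diag(1, z⁻¹)`. -/
def Λm : M2 := Matrix.diagonal ![1, T (-1)]

/-- `Λ⁻¹ = diag(1, z)`. -/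
def Λim : M2 := Matrix.diagonal ![1, T 1]

/-- `L = diag(1, -1)`. -/
def Lm : M2 := Matrix.diagonal ![1, -1]

/-- `J = [[0,1],[1,0]]`. -/
def Jm : M2 := !![0, 1; 1, 0]

/-- Upper-triangular lifting matrix `υ(S) = [[1,S],[0,1]]`. -/
def umat (S : R2) : M2 := !![1, S; 0, 1]

/-- Lower-triangular lifting matrix `λ(S) = [[1,0],[S,1]]`. -/
def lmat (S : R2) : M2 := !![1, 0; S, 1]

/-- Unimodular gain-scaling matrix `D_K = diag(1/K, K)`. -/
def DKm (K : ℝ) : M2 := Matrix.diagonal ![C K⁻¹, C K]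

/-- Conjugation `γ_K(A) = D_K · A · D_K⁻¹`. -/
def γm (K : ℝ) (A : M2) : M2 := DKm K * A * (DKm K)⁻¹

/-- Substitution `z ↦ z²` on Laurent polynomials. -/
def sub2 : R2 →ₐ[ℝ] R2 :=
  AddMonoidAlgebra.mapDomainAlgHom ℝ ℝ
    (AddMonoidHom.mk' (fun n : ℤ => 2 * n) (by intro a b; ring))

/-- The scalar filter `H_i(z) = H_{i0}(z²) + z·H_{i1}(z²)` of row `i` of `H`. -/
def scal (H : M2) (i : Fin 2) : R2 := sub2 (H i 0) + T 1 * sub2 (H i 1)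

/-- Order of a (nonzero) Laurent polynomial: largest minus smallest exponent
with nonzero coefficient. -/
def lorder (f : R2) : ℤ := (AddMonoidAlgebra.coeff f).support.max.unbotD 0 - (AddMonoidAlgebra.coeff f).support.min.untopD 0

/-- Evaluation of a Laurent polynomial at a (nonzero) real number. -/
def lev (x : ℝ) (f : R2) : ℝ := (AddMonoidAlgebra.coeff f).sum fun n a => a * x ^ n

/-- Combined support (in the exponent variable) of all entries of a matrix. -/
def msupp (H : M2) : Finset ℤ :=
  Finset.univ.biUnion fun p : Fin 2 × Fin 2 => (AddMonoidAlgebra.coeff (H p.1 p.2)).support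

/-- Polyphase order of a (nonzero) matrix Laurent polynomial `H = Σ h(n) z⁻ⁿ`:
`d - c` where `[c,d]` is the smallest interval with `h(c) ≠ 0 ≠ h(d)`. -/
def morder (H : M2) : ℤ := (msupp H).max.unbotD 0 - (msupp H).min.untopD 0

/-- The product `S_{N-1} ⋯ S_1 · S_0`. -/
def prodRev {M : Type*} [Monoid M] {N : ℕ} (SS : Fin N → M) : M :=
  ((List.ofFn SS).reverse).prod

/-- Partial products: `partialE SS B (n+1) = S_n ⋯ S_0 · B` and `partialE SS B 0 = B`. -/
def partialE {M : Type*} [Monoid M] {N : ℕ} (SS : Fin N → M) (B : M) : ℕ → M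
  | 0 => B
  | n + 1 => (if h : n < N then SS ⟨n, h⟩ else 1) * partialE SS B n

/-- `A` is an upper-triangular lifting matrix. -/
def IsUpper (A : M2) : Prop := ∃ S : R2, A = umat S

/-- `A` is a lower-triangular lifting matrix. -/
def IsLower (A : M2) : Prop := ∃ S : R2, A = lmat S

/-- Strict alternation of the predicates `up`/`lo` along a cascade: no two
consecutive factors are both upper-triangular or both lower-triangular. -/
def AlternatingP {α : Type*} (up lo : α → Prop) {N : ℕ} (SS : Fin N → α) : Prop :=
  ∀ (i : ℕ) (h : i + 1 < N),
    ¬(up (SS ⟨i, by omega⟩) ∧ up (SS ⟨i + 1, h⟩)) ∧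
    ¬(lo (SS ⟨i, by omega⟩) ∧ lo (SS ⟨i + 1, h⟩))

/-- Strict alternation of triangularity along a cascade of matrices. -/
def Alternating {N : ℕ} (SS : Fin N → M2) : Prop := AlternatingP IsUpper IsLower SS

/-- An irreducible cascade of lifting matrices: every factor is a lifting matrix,
no factor is the identity, and triangularity strictly alternates. -/
def IrrCascade {N : ℕ} (SS : Fin N → M2) : Prop :=
  (∀ i, (IsUpper (SS i) ∨ IsLower (SS i)) ∧ SS i ≠ 1) ∧ Alternating SS

/-- A group lifting structure: additive groups `P₀`, `P₁` of lifting filters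
(giving the lifting matrix groups `𝒰 = υ(P₀)` and `ℒ = λ(P₁)`), the full
gain-scaling group `𝒟`, and a set `𝔅 ⊆ SL(2,R)` of base filter banks. -/
structure GLS where
  P0 : AddSubgroup R2
  P1 : AddSubgroup R2
  Bset : Set M2
  hB : ∀ B ∈ Bset, Matrix.det B = 1

/-- The upper-triangular lifting matrix group `𝒰 = υ(P₀)`. -/
def GLS.Uset (G : GLS) : Set M2 := umat '' (G.P0 : Set R2)

/-- The lower-triangular lifting matrix group `ℒ = λ(P₁)`. -/
def GLS.Lset (G : GLS) : Set M2 := lmat '' (G.P1 : Set R2)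

/-- `𝒟`-invariance: every `γ_K` (`K ≠ 0`) fixes `𝒰` and `ℒ`. -/
def GLS.DInv (G : GLS) : Prop :=
  ∀ K : ℝ, K ≠ 0 → γm K '' G.Uset = G.Uset ∧ γm K '' G.Lset = G.Lset

/-- An irreducible cascade over `𝒰 ∪ ℒ`. -/
def GLS.IrrCas (G : GLS) {N : ℕ} (SS : Fin N → M2) : Prop :=
  (∀ i, SS i ∈ G.Uset ∪ G.Lset ∧ SS i ≠ 1) ∧ Alternating SS

/-- The strictly polyphase order-increasing property: along every irreducible
cascade applied to every base filter bank, the polyphase order of the partial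
products strictly increases. -/
def GLS.OrderInc (G : GLS) : Prop :=
  ∀ B ∈ G.Bset, ∀ (N : ℕ) (SS : Fin N → M2), G.IrrCas SS →
    ∀ n < N, morder (partialE SS B (n + 1)) > morder (partialE SS B n)


/-! ### Auxiliary lemmas -/

lemma umat_mul (a b : R2) : umat a * umat b = umat (a + b) := by
  simp [umat, Matrix.mul_fin_two, add_comm]

lemma lmat_mul (a b : R2) : lmat a * lmat b = lmat (a + b) := by
  simp [lmat, Matrix.mul_fin_two, add_comm]

lemma umat_zero : umat 0 = 1 := by
  simp [umat, ← Matrix.one_fin_two]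

lemma lmat_zero : lmat 0 = 1 := by
  simp [lmat, ← Matrix.one_fin_two]

lemma umat_eq_one {a : R2} : umat a = 1 ↔ a = 0 := by
  constructor
  · intro h
    have := congrArg (fun M => M 0 1) h
    simpa [umat, Matrix.one_apply] using this
  · rintro rfl; exact umat_zero

lemma lmat_eq_one {a : R2} : lmat a = 1 ↔ a = 0 := by
  constructor
  · intro h
    have := congrArg (fun M => M 1 0) h
    simpa [lmat, Matrix.one_apply] using this
  · rintro rfl; exact lmat_zero

lemma umat_eq_lmat {a b : R2} (h : umat a = lmat b) : a = 0 ∧ b = 0 := by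
  constructor
  · have := congrArg (fun M => M 0 1) h
    simpa [umat, lmat] using this
  · have := congrArg (fun M => M 1 0) h
    simpa [umat, lmat] using this.symm

lemma not_isLower_umat {a : R2} (ha : a ≠ 0) : ¬ IsLower (umat a) := by
  rintro ⟨b, hb⟩
  exact ha (umat_eq_lmat hb).1

lemma not_isUpper_lmat {b : R2} (hb : b ≠ 0) : ¬ IsUpper (lmat b) := by
  rintro ⟨a, ha⟩
  exact hb (umat_eq_lmat ha.symm).2

lemma isUpper_umat (a : R2) : IsUpper (umat a) := ⟨a, rfl⟩

lemma isLower_lmat (a : R2) : IsLower (lmat a) := ⟨a, rfl⟩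

/-- Classification of nonidentity elements of `𝒰 ∪ ℒ`. -/
lemma classify (G : GLS) {A : M2} (hm : A ∈ G.Uset ∪ G.Lset) (h1 : A ≠ 1) :
    (∃ a ∈ G.P0, a ≠ 0 ∧ A = umat a) ∨ (∃ b ∈ G.P1, b ≠ 0 ∧ A = lmat b) := by
  rcases hm with ⟨a, ha, rfl⟩ | ⟨b, hb, rfl⟩
  · exact Or.inl ⟨a, ha, fun h0 => h1 (by rw [h0]; exact umat_zero), rfl⟩
  · exact Or.inr ⟨b, hb, fun h0 => h1 (by rw [h0]; exact lmat_zero), rfl⟩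

/-! ### `prodRev` and `partialE` lemmas -/

lemma prodRev_zero (SS : Fin 0 → M2) : prodRev SS = 1 := by
  simp [prodRev]

lemma prodRev_succ {N : ℕ} (SS : Fin (N + 1) → M2) :
    prodRev SS = prodRev (Fin.tail SS) * SS 0 := by
  unfold prodRev
  rw [List.ofFn_succ]
  simp [Fin.tail]
  rfl

lemma prodRev_last {N : ℕ} (SS : Fin (N + 1) → M2) :
    prodRev SS = SS (Fin.last N) * prodRev (Fin.init SS) := by
  unfold prodRev
  rw [List.ofFn_succ']
  simp [Fin.init]
  rfl

lemma partialE_castSucc {N : ℕ} (SS : Fin (N + 1) → M2) (B : M2) :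
    ∀ n ≤ N, partialE SS B n = partialE (Fin.init SS) B n := by
  intro n hn
  induction n with
  | zero => rfl
  | succ m ih =>
      have hm : m < N := hn
      have hm1 : m < N + 1 := by omega
      simp only [partialE, dif_pos hm, dif_pos hm1, ih (le_of_lt hm)]
      rfl

lemma partialE_prod {N : ℕ} (SS : Fin N → M2) (B : M2) :
    partialE SS B N = prodRev SS * B := by
  induction N with
  | zero => simp [partialE, prodRev_zero]
  | succ M ih =>
      have h1 : partialE SS B (M + 1)
          = SS ⟨M, Nat.lt_succ_self M⟩ * partialE SS B M := by
        simp [partialE]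
      rw [h1, partialE_castSucc SS B M le_rfl, ih (Fin.init SS),
        prodRev_last SS, mul_assoc]
      rfl

lemma morder_partial_ge (G : GLS) (hOI : G.OrderInc) {B : M2} (hB : B ∈ G.Bset)
    {N : ℕ} {SS : Fin N → M2} (hIrr : G.IrrCas SS) :
    ∀ n ≤ N, morder B + n ≤ morder (partialE SS B n) := by
  intro n hn
  induction n with
  | zero => simp [partialE]
  | succ m ih =>
      have hmN : m < N := hn
      have h1 := hOI B hB N SS hIrr m hmN
      have h2 := ih (le_of_lt hmN)
      push_cast
      push_cast at h2
      omega

/-- An irreducible cascade whose product is the identity is empty. -/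
lemma irr_len_zero (G : GLS) (hOI : G.OrderInc) (hne : G.Bset.Nonempty)
    {N : ℕ} {SS : Fin N → M2} (hIrr : G.IrrCas SS) (hp : prodRev SS = 1) :
    N = 0 := by
  obtain ⟨B, hB⟩ := hne
  have h1 := morder_partial_ge G hOI hB hIrr N le_rfl
  rw [partialE_prod, hp, one_mul] at h1
  omega

/-! ### Cascade constructions -/

lemma irrCas_tail (G : GLS) {N : ℕ} {SS : Fin (N + 1) → M2}
    (h : G.IrrCas SS) : G.IrrCas (Fin.tail SS) := by
  constructor
  · intro i; exact h.1 i.succ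
  · intro i hi
    have := h.2 (i + 1) (by omega)
    exact this

lemma irrCas_cons (G : GLS) {N : ℕ} {SS : Fin N → M2} (x : M2)
    (hx : x ∈ G.Uset ∪ G.Lset) (hx1 : x ≠ 1) (hS : G.IrrCas SS)
    (hcompat : ∀ h0 : 0 < N,
      ¬(IsUpper x ∧ IsUpper (SS ⟨0, h0⟩)) ∧ ¬(IsLower x ∧ IsLower (SS ⟨0, h0⟩))) :
    G.IrrCas (Fin.cons x SS) := by
  constructor
  · intro i
    refine Fin.cases ?_ ?_ i
    · simpa using ⟨hx, hx1⟩
    · intro j; simpa using hS.1 j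
  · intro i hi
    match i with
    | 0 =>
        have h0 : 0 < N := by omega
        have e1 : (Fin.cons x SS : Fin (N+1) → M2) ⟨0, by omega⟩ = x := rfl
        have e2 : (Fin.cons x SS : Fin (N+1) → M2) ⟨1, hi⟩ = SS ⟨0, h0⟩ := rfl
        rw [e1, e2]
        exact hcompat h0
    | j + 1 =>
        have hj : j + 1 < N := by omega
        have e1 : (Fin.cons x SS : Fin (N+1) → M2) ⟨j+1, by omega⟩
            = SS ⟨j, by omega⟩ := rfl
        have e2 : (Fin.cons x SS : Fin (N+1) → M2) ⟨j+2, hi⟩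
            = SS ⟨j+1, hj⟩ := rfl
        rw [e1, e2]
        exact hS.2 j hj

lemma isUnit_umat (a : R2) : IsUnit (umat a) :=
  ⟨⟨umat a, umat (-a), by rw [umat_mul]; simp [umat_zero],
    by rw [umat_mul]; simp [umat_zero]⟩, rfl⟩

lemma isUnit_lmat (a : R2) : IsUnit (lmat a) :=
  ⟨⟨lmat a, lmat (-a), by rw [lmat_mul]; simp [lmat_zero],
    by rw [lmat_mul]; simp [lmat_zero]⟩, rfl⟩

lemma keylem (G : GLS) (hOI : G.OrderInc) (hne : G.Bset.Nonempty) :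
    ∀ N N' : ℕ, ∀ (SS : Fin N → M2) (SS' : Fin N' → M2),
      G.IrrCas SS → G.IrrCas SS' → prodRev SS = prodRev SS' →
      N' = N ∧ ∀ (i : ℕ) (h : i < N) (h' : i < N'), SS' ⟨i, h'⟩ = SS ⟨i, h⟩ := by
  intro N
  induction N using Nat.strong_induction_on with
  | _ N IH =>
  intro N' SS SS' hIrr hIrr' heq
  cases N with
  | zero =>
      have hN' : N' = 0 :=
        irr_len_zero G hOI hne hIrr' (by rw [← heq, prodRev_zero])
      exact ⟨hN', by intro i h h'; omega⟩
  | succ M =>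
  cases N' with
  | zero =>
      have : M + 1 = 0 :=
        irr_len_zero G hOI hne hIrr (by rw [heq, prodRev_zero])
      omega
  | succ M' =>
  -- rewrite the two products by stripping the first factor
  have hps : prodRev SS = prodRev (Fin.tail SS) * SS 0 := prodRev_succ SS
  have hps' : prodRev SS' = prodRev (Fin.tail SS') * SS' 0 := prodRev_succ SS'
  -- Main claim: the first factors agree.
  have hS0 : SS' 0 = SS 0 := by
    rcases classify G (hIrr.1 0).1 (hIrr.1 0).2 with
      ⟨a, ha, ha0, hSa⟩ | ⟨b, hb, hb0, hSb⟩
    · rcases classify G (hIrr'.1 0).1 (hIrr'.1 0).2 with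
        ⟨a', ha', ha0', hSa'⟩ | ⟨b', hb', hb0', hSb'⟩
      · -- both upper
        by_cases hd : a' = a
        · rw [hSa', hSa, hd]
        · exfalso
          set T : Fin (M' + 1) → M2 := Fin.cons (umat (a' - a)) (Fin.tail SS') with hTdef
          have hsub0 : a' - a ≠ 0 := sub_ne_zero.mpr hd
          have hT : G.IrrCas T := by
            apply irrCas_cons G _ (Or.inl ⟨a' - a, sub_mem ha' ha, rfl⟩)
              (fun h => hsub0 (umat_eq_one.mp h)) (irrCas_tail G hIrr')
            intro h0
            have halt' := hIrr'.2 0 (by omega)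
            have e2 : (Fin.tail SS') ⟨0, h0⟩ = SS' ⟨1, by omega⟩ := rfl
            rw [e2]
            constructor
            · rintro ⟨-, hup⟩
              exact halt'.1 ⟨by rw [Fin.mk_zero, hSa']; exact isUpper_umat a', hup⟩
            · rintro ⟨hlo, -⟩
              exact not_isLower_umat hsub0 hlo
          have prodT : prodRev (Fin.tail SS) = prodRev T := by
            have h1 : prodRev T = prodRev (Fin.tail SS') * umat (a' - a) := by
              rw [prodRev_succ T]
              simp [hTdef]
            have h2 : prodRev (Fin.tail SS) * umat a * umat (-a)
                = prodRev (Fin.tail SS') * umat a' * umat (-a) := by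
              rw [← hSa, ← hSa', ← hps, ← hps', heq]
            rw [h1]
            calc prodRev (Fin.tail SS)
                = prodRev (Fin.tail SS) * umat a * umat (-a) := by
                  rw [mul_assoc, umat_mul]; simp [umat_zero]
              _ = prodRev (Fin.tail SS') * umat a' * umat (-a) := h2
              _ = prodRev (Fin.tail SS') * umat (a' - a) := by
                  rw [mul_assoc, umat_mul, sub_eq_add_neg]
          obtain ⟨hlen, hfac⟩ := IH M (by omega) (M' + 1) (Fin.tail SS) T
            (irrCas_tail G hIrr) hT prodT
          have h0M : 0 < M := by omega
          have e := hfac 0 h0M (by omega)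
          have eT : T ⟨0, by omega⟩ = umat (a' - a) := rfl
          have eS : (Fin.tail SS) ⟨0, h0M⟩ = SS ⟨1, by omega⟩ := rfl
          rw [eT, eS] at e
          exact (hIrr.2 0 (by omega)).1
            ⟨by rw [Fin.mk_zero, hSa]; exact isUpper_umat a, ⟨_, e.symm⟩⟩
      · -- SS upper, SS' lower : always a contradiction
        exfalso
        set T : Fin (M' + 2) → M2 := Fin.cons (umat (-a)) SS' with hTdef
        have hna0 : (-a : R2) ≠ 0 := neg_ne_zero.mpr ha0
        have hT : G.IrrCas T := by
          apply irrCas_cons G _ (Or.inl ⟨-a, neg_mem ha, rfl⟩)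
            (fun h => hna0 (umat_eq_one.mp h)) hIrr'
          intro h0
          have e2 : SS' ⟨0, h0⟩ = SS' 0 := rfl
          rw [e2]
          constructor
          · rintro ⟨-, hup⟩
            rw [hSb'] at hup
            exact not_isUpper_lmat hb0' hup
          · rintro ⟨hlo, -⟩
            exact not_isLower_umat hna0 hlo
        have prodT : prodRev (Fin.tail SS) = prodRev T := by
          have h1 : prodRev T = prodRev SS' * umat (-a) := by
            rw [prodRev_succ T]
            simp [hTdef, hps']
          rw [h1, ← heq, hps, hSa, mul_assoc, umat_mul]
          simp [umat_zero]
        obtain ⟨hlen, hfac⟩ := IH M (by omega) (M' + 2) (Fin.tail SS) T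
          (irrCas_tail G hIrr) hT prodT
        have h0M : 0 < M := by omega
        have e := hfac 0 h0M (by omega)
        have eT : T ⟨0, by omega⟩ = umat (-a) := rfl
        have eS : (Fin.tail SS) ⟨0, h0M⟩ = SS ⟨1, by omega⟩ := rfl
        rw [eT, eS] at e
        exact (hIrr.2 0 (by omega)).1
          ⟨by rw [Fin.mk_zero, hSa]; exact isUpper_umat a, ⟨_, e.symm⟩⟩
    · rcases classify G (hIrr'.1 0).1 (hIrr'.1 0).2 with
        ⟨a', ha', ha0', hSa'⟩ | ⟨b', hb', hb0', hSb'⟩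
      · -- SS lower, SS' upper : always a contradiction
        exfalso
        set T : Fin (M' + 2) → M2 := Fin.cons (lmat (-b)) SS' with hTdef
        have hnb0 : (-b : R2) ≠ 0 := neg_ne_zero.mpr hb0
        have hT : G.IrrCas T := by
          apply irrCas_cons G _ (Or.inr ⟨-b, neg_mem hb, rfl⟩)
            (fun h => hnb0 (lmat_eq_one.mp h)) hIrr'
          intro h0
          have e2 : SS' ⟨0, h0⟩ = SS' 0 := rfl
          rw [e2]
          constructor
          · rintro ⟨hup, -⟩
            exact not_isUpper_lmat hnb0 hup
          · rintro ⟨-, hlo⟩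
            rw [hSa'] at hlo
            exact not_isLower_umat ha0' hlo
        have prodT : prodRev (Fin.tail SS) = prodRev T := by
          have h1 : prodRev T = prodRev SS' * lmat (-b) := by
            rw [prodRev_succ T]
            simp [hTdef, hps']
          rw [h1, ← heq, hps, hSb, mul_assoc, lmat_mul]
          simp [lmat_zero]
        obtain ⟨hlen, hfac⟩ := IH M (by omega) (M' + 2) (Fin.tail SS) T
          (irrCas_tail G hIrr) hT prodT
        have h0M : 0 < M := by omega
        have e := hfac 0 h0M (by omega)
        have eT : T ⟨0, by omega⟩ = lmat (-b) := rfl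
        have eS : (Fin.tail SS) ⟨0, h0M⟩ = SS ⟨1, by omega⟩ := rfl
        rw [eT, eS] at e
        exact (hIrr.2 0 (by omega)).2
          ⟨by rw [Fin.mk_zero, hSb]; exact isLower_lmat b, ⟨_, e.symm⟩⟩
      · -- both lower
        by_cases hd : b' = b
        · rw [hSb', hSb, hd]
        · exfalso
          set T : Fin (M' + 1) → M2 := Fin.cons (lmat (b' - b)) (Fin.tail SS') with hTdef
          have hsub0 : b' - b ≠ 0 := sub_ne_zero.mpr hd
          have hT : G.IrrCas T := by
            apply irrCas_cons G _ (Or.inr ⟨b' - b, sub_mem hb' hb, rfl⟩)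
              (fun h => hsub0 (lmat_eq_one.mp h)) (irrCas_tail G hIrr')
            intro h0
            have halt' := hIrr'.2 0 (by omega)
            have e2 : (Fin.tail SS') ⟨0, h0⟩ = SS' ⟨1, by omega⟩ := rfl
            rw [e2]
            constructor
            · rintro ⟨hup, -⟩
              exact not_isUpper_lmat hsub0 hup
            · rintro ⟨-, hlo⟩
              exact halt'.2 ⟨by rw [Fin.mk_zero, hSb']; exact isLower_lmat b', hlo⟩
          have prodT : prodRev (Fin.tail SS) = prodRev T := by
            have h1 : prodRev T = prodRev (Fin.tail SS') * lmat (b' - b) := by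
              rw [prodRev_succ T]
              simp [hTdef]
            have h2 : prodRev (Fin.tail SS) * lmat b * lmat (-b)
                = prodRev (Fin.tail SS') * lmat b' * lmat (-b) := by
              rw [← hSb, ← hSb', ← hps, ← hps', heq]
            rw [h1]
            calc prodRev (Fin.tail SS)
                = prodRev (Fin.tail SS) * lmat b * lmat (-b) := by
                  rw [mul_assoc, lmat_mul]; simp [lmat_zero]
              _ = prodRev (Fin.tail SS') * lmat b' * lmat (-b) := h2
              _ = prodRev (Fin.tail SS') * lmat (b' - b) := by
                  rw [mul_assoc, lmat_mul, sub_eq_add_neg]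
          obtain ⟨hlen, hfac⟩ := IH M (by omega) (M' + 1) (Fin.tail SS) T
            (irrCas_tail G hIrr) hT prodT
          have h0M : 0 < M := by omega
          have e := hfac 0 h0M (by omega)
          have eT : T ⟨0, by omega⟩ = lmat (b' - b) := rfl
          have eS : (Fin.tail SS) ⟨0, h0M⟩ = SS ⟨1, by omega⟩ := rfl
          rw [eT, eS] at e
          exact (hIrr.2 0 (by omega)).2
            ⟨by rw [Fin.mk_zero, hSb]; exact isLower_lmat b, ⟨_, e.symm⟩⟩
  -- Now cancel the first factor and use the induction hypothesis on the tails.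
  have hunit : IsUnit (SS 0) := by
    rcases classify G (hIrr.1 0).1 (hIrr.1 0).2 with ⟨a, -, -, hSa⟩ | ⟨b, -, -, hSb⟩
    · rw [hSa]; exact isUnit_umat a
    · rw [hSb]; exact isUnit_lmat b
  have htails : prodRev (Fin.tail SS) = prodRev (Fin.tail SS') := by
    apply hunit.mul_right_cancel
    rw [← hps, heq, hps', hS0]
  obtain ⟨hlen, hfac⟩ := IH M (by omega) M' (Fin.tail SS) (Fin.tail SS')
    (irrCas_tail G hIrr) (irrCas_tail G hIrr') htails
  refine ⟨by omega, ?_⟩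
  intro i h h'
  match i with
  | 0 => exact hS0
  | j + 1 =>
      have e := hfac j (by omega) (by omega)
      exact e
/-- cf. Brislawn, Group-theoretic structure, Lemma 1.  In a
`𝒟`-invariant, order-increasing group lifting structure with nonempty base set,
irreducible group lifting factorizations in the lifting cascade group
`𝒞 = ⟨𝒰 ∪ ℒ⟩` are unique. -/
theorem stmt14 (G : GLS) (hD : G.DInv) (hOI : G.OrderInc) (hne : G.Bset.Nonempty)
    (N N' : ℕ) (SS : Fin N → M2) (SS' : Fin N' → M2)
    (hIrr : G.IrrCas SS) (hIrr' : G.IrrCas SS')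
    (heq : prodRev SS = prodRev SS') :
    N' = N ∧ ∀ (i : ℕ) (h : i < N) (h' : i < N'), SS' ⟨i, h'⟩ = SS ⟨i, h⟩ := by

  exact keylem G hOI hne N N' SS SS' hIrr hIrr' heq
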